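/- Let T be the generalized Cantor set built from (α_k) with 0 < α_k < 1/2. Then the Lebesgue measure of T equals lim_{k→∞} (2^k ∏_{j<k} α_j) = ∏_{j=0}^{∞} (2α_j). In particular, if α_k → 1/2 fast enough that ∏ (2α_j) > 0, then T has positive Lebesgue measure. -/

import Mathlib

/-- Level-`k` approximation of the generalized Cantor set built from ratios
`α n, α (n+1), …` (applied outermost first). `genA α n (k+1)` is obtained from
`genA α n k`-structure by keeping the two closed end-intervals of relative
length `α n` of `[0,1]` and recursing with the shifted sequence. -/
def genA (α : ℕ → ℝ) : ℕ → ℕ → Set ℝ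
  | _, 0 => Set.Icc 0 1
  | n, (k + 1) =>
      ((fun x => α n * x) '' genA α (n + 1) k) ∪
      ((fun x => 1 - α n + α n * x) '' genA α (n + 1) k)

/-- The generalized Cantor set built from the sequence of ratios `α`. -/
def genCantor (α : ℕ → ℝ) : Set ℝ := ⋂ k, genA α 0 k

/-- The graininess (forward-jump gap) of a set `T` at `β`. -/
noncomputable def mu (T : Set ℝ) (β : ℝ) : ℝ := sInf {t ∈ T | β < t} - β

open Filter MeasureTheory Set Pointwise

lemma genA_subset (α : ℕ → ℝ) (hα : ∀ k, 0 < α k ∧ α k < 1 / 2) :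
    ∀ k n, genA α n k ⊆ Set.Icc 0 1 := by
  intro k
  induction k with
  | zero => intro n; exact subset_rfl
  | succ k ih =>
    intro n x hx
    obtain ⟨h1, h2⟩ := hα n
    rcases hx with ⟨y, hy, rfl⟩ | ⟨y, hy, rfl⟩ <;>
      obtain ⟨hy0, hy1⟩ := ih (n + 1) hy <;>
      simp only [Set.mem_Icc] <;> constructor <;> nlinarith

lemma genA_antitone (α : ℕ → ℝ) (hα : ∀ k, 0 < α k ∧ α k < 1 / 2) :
    ∀ k n, genA α n (k + 1) ⊆ genA α n k := by
  intro k
  induction k with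
  | zero => intro n; exact genA_subset α hα 1 n
  | succ k ih =>
    intro n
    exact Set.union_subset_union (Set.image_mono (ih (n + 1))) (Set.image_mono (ih (n + 1)))

lemma genA_compact (α : ℕ → ℝ) : ∀ k n, IsCompact (genA α n k) := by
  intro k
  induction k with
  | zero => intro n; exact isCompact_Icc
  | succ k ih =>
    intro n
    exact ((ih (n + 1)).image (by continuity)).union ((ih (n + 1)).image (by continuity))

lemma vol_image_affine (a c : ℝ) (ha : 0 ≤ a) (s : Set ℝ) :
    volume ((fun x => c + a * x) '' s) = ENNReal.ofReal a * volume s := by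
  have h1 : (fun x => c + a * x) '' s = (fun x => c + x) '' ((fun x => a * x) '' s) := by
    rw [Set.image_image]
  have h2 : (fun x => a * x) '' s = a • s := by
    rw [← Set.image_smul]; simp [smul_eq_mul]
  rw [h1, Set.image_add_left, measure_preimage_add, h2, Measure.addHaar_smul]
  simp [abs_of_nonneg ha]

lemma genA_volume (α : ℕ → ℝ) (hα : ∀ k, 0 < α k ∧ α k < 1 / 2) :
    ∀ k n, volume (genA α n k) = ENNReal.ofReal (∏ j ∈ Finset.range k, (2 * α (n + j))) := by
  intro k
  induction k with
  | zero => intro n; simp [genA]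
  | succ k ih =>
    intro n
    obtain ⟨h1, h2⟩ := hα n
    have hsub := genA_subset α hα k (n + 1)
    have hdisj : Disjoint ((fun x => α n * x) '' genA α (n + 1) k)
        ((fun x => 1 - α n + α n * x) '' genA α (n + 1) k) := by
      rw [Set.disjoint_left]
      rintro x ⟨y, hy, rfl⟩ ⟨z, hz, hz'⟩
      obtain ⟨hy0, hy1⟩ := hsub hy
      obtain ⟨hz0, hz1⟩ := hsub hz
      simp only at hz'
      nlinarith
    have hmeas : MeasurableSet ((fun x => 1 - α n + α n * x) '' genA α (n + 1) k) :=
      ((genA_compact α k (n + 1)).image (by continuity)).isClosed.measurableSet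
    show volume (_ ∪ _) = _
    rw [measure_union hdisj hmeas]
    have e1 : (fun x => α n * x) = (fun x => (0 : ℝ) + α n * x) := by funext x; ring
    have hprod : 0 ≤ ∏ j ∈ Finset.range k, 2 * α (n + 1 + j) :=
      Finset.prod_nonneg fun j _ => by nlinarith [(hα (n + 1 + j)).1]
    rw [e1, vol_image_affine _ _ h1.le, vol_image_affine _ _ h1.le, ih (n + 1),
      ← ENNReal.ofReal_mul h1.le, ← ENNReal.ofReal_add (mul_nonneg h1.le hprod) (mul_nonneg h1.le hprod)]
    congr 1
    have e2 : ∀ j, 2 * α (n + 1 + j) = 2 * α (n + (j + 1)) := by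
      intro j; congr 2; omega
    rw [Finset.prod_range_succ']
    simp only [add_zero, ← e2]
    ring


/-- the Lebesgue measure of the generalized Cantor set equals
`lim_k 2^k ∏_{j<k} α_j = ∏_j (2 α_j)`; in particular if that limit is positive,
`T` has positive measure. -/
theorem genCantor_volume (α : ℕ → ℝ) (hα : ∀ k, 0 < α k ∧ α k < 1 / 2) (L : ℝ)
    (hL : Tendsto (fun k => (2 : ℝ) ^ k * ∏ j ∈ Finset.range k, α j) atTop (nhds L)) :
    (∀ k, (2 : ℝ) ^ k * ∏ j ∈ Finset.range k, α j = ∏ j ∈ Finset.range k, (2 * α j)) ∧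
    volume (genCantor α) = ENNReal.ofReal L ∧
    (0 < L → 0 < volume (genCantor α)) := by
  have heq : ∀ k, (2 : ℝ) ^ k * ∏ j ∈ Finset.range k, α j
      = ∏ j ∈ Finset.range k, (2 * α j) := by
    intro k
    rw [Finset.prod_mul_distrib, Finset.prod_const, Finset.card_range]
  have hvol : volume (genCantor α) = ENNReal.ofReal L := by
    have hanti : Antitone fun k => genA α 0 k :=
      antitone_nat_of_succ_le fun k => genA_antitone α hα k 0
    have hmeas : ∀ k, NullMeasurableSet (genA α 0 k) volume := fun k =>
      ((genA_compact α k 0).isClosed.measurableSet).nullMeasurableSet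
    have hfin : ∃ k, volume (genA α 0 k) ≠ ⊤ := ⟨0, by simp [genA]⟩
    have ht := tendsto_measure_iInter_atTop hmeas hanti hfin
    have ht2 : Tendsto (fun k => volume (genA α 0 k)) atTop (nhds (ENNReal.ofReal L)) := by
      have : (fun k => volume (genA α 0 k))
          = fun k => ENNReal.ofReal (∏ j ∈ Finset.range k, (2 * α j)) := by
        funext k
        rw [genA_volume α hα k 0]
        simp
      rw [this]
      have hL2 : Tendsto (fun k => ∏ j ∈ Finset.range k, (2 * α j)) atTop (nhds L) := by
        simpa only [heq] using hL
      exact (ENNReal.continuous_ofReal.tendsto L).comp hL2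
    exact tendsto_nhds_unique ht ht2
  refine ⟨heq, hvol, fun hLpos => ?_⟩
  rw [hvol]
  simpa using hLpos
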